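/- Let m ≥ 3 be an integer. The center of the dihedral Artin group G(m) is the infinite cyclic subgroup generated by z, where z = (x₁x₂)^{m/2} if m is even and z = (x₁x₂)^m if m is odd. -/

import Mathlib

/-- The alternating product `xyxy⋯` with `m` factors, starting with `x`. -/
def altProd {G : Type*} [Monoid G] : ℕ → G → G → G
  | 0, _, _ => 1
  | m + 1, x, y => x * altProd m y x

/-- The Artin relators associated to a Coxeter matrix `M` (with entries in `ℕ∞`):
for each pair `i ≠ j` with `M i j = m` finite, the relator `ₘ(xᵢ,xⱼ) ₘ(xⱼ,xᵢ)⁻¹`. -/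
def artinRels {n : ℕ} (M : Fin n → Fin n → ℕ∞) : Set (FreeGroup (Fin n)) :=
  { r | ∃ (i j : Fin n) (m : ℕ), i ≠ j ∧ M i j = (m : ℕ∞) ∧
        r = altProd m (FreeGroup.of i) (FreeGroup.of j) *
            (altProd m (FreeGroup.of j) (FreeGroup.of i))⁻¹ }

/-- The Artin group defined by the Coxeter matrix `M`. -/
abbrev ArtinGroup {n : ℕ} (M : Fin n → Fin n → ℕ∞) : Type := PresentedGroup (artinRels M)

/-- The standard generators of the Artin group. -/
def agen {n : ℕ} (M : Fin n → Fin n → ℕ∞) (i : Fin n) : ArtinGroup M :=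
  PresentedGroup.of i

/-- `M` is a Coxeter matrix of extra-large type: symmetric, `1` on the diagonal,
and all off-diagonal entries at least `4` (possibly `∞`). -/
structure IsXLMatrix {n : ℕ} (M : Fin n → Fin n → ℕ∞) : Prop where
  symm : ∀ i j, M i j = M j i
  diag : ∀ i, M i i = 1
  large : ∀ i j, i ≠ j → 4 ≤ M i j

/-- `M` is a Coxeter matrix of large type: symmetric, `1` on the diagonal,
and all off-diagonal entries at least `3` (possibly `∞`). -/
structure IsLargeMatrix {n : ℕ} (M : Fin n → Fin n → ℕ∞) : Prop where
  symm : ∀ i j, M i j = M j i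
  diag : ∀ i, M i i = 1
  large : ∀ i j, i ≠ j → 3 ≤ M i j

/-- The element of a group represented by a word over `X ∪ X⁻¹`, where a word is a list
of pairs `(i, ε)` with `ε = true` for the generator `x i` and `ε = false` for its inverse. -/
def wordProd {G : Type*} [Group G] {α : Type*} (x : α → G) (w : List (α × Bool)) : G :=
  (w.map fun p => if p.2 then x p.1 else (x p.1)⁻¹).prod

/-- The length `|g|` of `g`: the minimal length of a word over `X ∪ X⁻¹` representing `g`. -/
noncomputable def wlen {G : Type*} [Group G] {α : Type*} (x : α → G) (g : G) : ℕ :=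
  sInf { k | ∃ w : List (α × Bool), w.length = k ∧ wordProd x w = g }

/-- A word is geodesic if its length equals the length of the element it represents. -/
def IsGeodesicWord {G : Type*} [Group G] {α : Type*} (x : α → G) (w : List (α × Bool)) :
    Prop :=
  w.length = wlen x (wordProd x w)

/-- An element `g` is cyclically reduced if `|a g a⁻¹| ≥ |g|` for every letter
`a ∈ X ∪ X⁻¹`. -/
def CyclicallyReduced {G : Type*} [Group G] {α : Type*} (x : α → G) (g : G) : Prop :=
  ∀ p : α × Bool, wlen x g ≤ wlen x (wordProd x [p] * g * (wordProd x [p])⁻¹)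

/-- `d` is a left divisor of `g`: `|d| + |d⁻¹g| = |g|`. -/
def IsLeftDivisor {G : Type*} [Group G] {α : Type*} (x : α → G) (d g : G) : Prop :=
  wlen x d + wlen x (d⁻¹ * g) = wlen x g

/-- `d` is a right divisor of `g`: `|gd⁻¹| + |d| = |g|`. -/
def IsRightDivisor {G : Type*} [Group G] {α : Type*} (x : α → G) (d g : G) : Prop :=
  wlen x (g * d⁻¹) + wlen x d = wlen x g

/-- The Coxeter matrix of the dihedral Artin group `G(m)`. -/
def Mdih (m : ℕ) : Fin 2 → Fin 2 → ℕ∞ := fun i j => if i = j then 1 else (m : ℕ∞)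

/-- The dihedral Artin group `G(m) = ⟨x₁,x₂ ∣ ₘ(x₁,x₂) = ₘ(x₂,x₁)⟩`. -/
abbrev DihedralArtinGroup (m : ℕ) : Type := ArtinGroup (Mdih m)

section AltProd
variable {G : Type*} [Monoid G]

theorem mul_pow_mul' (x y : G) (k : ℕ) : x * (y * x) ^ k = (x * y) ^ k * x :=
  (SemiconjBy.pow_right (by simp [SemiconjBy, mul_assoc]) k)

theorem altProd_even (k : ℕ) (x y : G) : altProd (2 * k) x y = (x * y) ^ k := by
  induction k generalizing x y with
  | zero => simp [altProd]
  | succ n ih =>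
      have h2 : 2 * (n + 1) = (2 * n) + 1 + 1 := by ring
      rw [h2]
      show x * (y * altProd (2 * n) x y) = _
      rw [ih, pow_succ' (x * y) n, mul_assoc]

theorem altProd_odd (k : ℕ) (x y : G) : altProd (2 * k + 1) x y = (x * y) ^ k * x := by
  show x * altProd (2 * k) y x = _
  rw [altProd_even, mul_pow_mul']

theorem altProd_of_odd {m k : ℕ} (hm : m = 2 * k + 1) (x y : G) :
    altProd m x y = (x * y) ^ k * x := by
  subst hm
  exact altProd_odd k x y

theorem map_altProd {H : Type*} [Monoid H] (f : G →* H) (n : ℕ) (x y : G) :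
    f (altProd n x y) = altProd n (f x) (f y) := by
  induction n generalizing x y with
  | zero => simp [altProd]
  | succ n ih => show f (x * altProd n y x) = f x * altProd n (f y) (f x); rw [map_mul, ih]

end AltProd


open Monoid Monoid.CoprodI in
theorem coprodI_central_eq_one {ι : Type*} [DecidableEq ι] {H : ι → Type*}
    [∀ i, Group (H i)] [∀ i, (a b : H i) → Decidable (a = b)] [∀ i, Nontrivial (H i)]
    (hι : ∀ i : ι, ∃ j, j ≠ i)
    {g : CoprodI H} (hg : ∀ h : CoprodI H, h * g = g * h) : g = 1 := by
  classical
  have hinj : Function.Injective (Word.prod : Word H → CoprodI H) :=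
    Word.equiv.symm.injective
  have hpw : Word.prod (Word.equiv g) = g := Word.equiv.symm_apply_apply g
  set w := Word.equiv g with hwdef
  rcases hL : w.toList with _ | ⟨⟨i, a⟩, rest⟩
  · have hwe : w = Word.empty := Word.ext (by simp [hL])
    rw [← hpw, hwe, Word.prod_empty]
  · exfalso
    have hchain := w.chain_ne
    have hne_one := w.ne_one
    set l0 : (Σ i, H i) := (⟨i, a⟩ :: rest).getLast (by simp) with hl0def
    have hl0 : w.toList.getLast? = some l0 := by
      rw [hL, List.getLast?_eq_getLast (by simp)]
    by_cases hlast : l0.1 = i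
    · -- sandwich case
      obtain ⟨j, hj⟩ := hι i
      obtain ⟨c, hc⟩ := exists_ne (1 : H j)
      have hchain2 : (⟨j, c⟩ :: (w.toList ++ [⟨j, c⁻¹⟩]) :
          List (Σ i, H i)).IsChain (fun l l' => l.1 ≠ l'.1) := by
        rw [List.isChain_cons]
        constructor
        · intro b hb
          rw [hL] at hb
          simp at hb
          subst hb
          exact hj
        · rw [List.isChain_append]
          refine ⟨w.chain_ne, by simp, ?_⟩
          intro x hx y hy
          simp at hy
          rw [hl0, Option.mem_some_iff] at hx
          subst hx
          subst hy
          rw [hlast]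
          exact fun h => hj h.symm
      set w2 : Word H := ⟨⟨j, c⟩ :: (w.toList ++ [⟨j, c⁻¹⟩]), by
          intro l hl
          simp only [List.mem_cons, List.mem_append, List.mem_singleton] at hl
          rcases hl with rfl | hl | rfl | hl
          · exact hc
          · exact hne_one l hl
          · exact inv_ne_one.2 hc
          · simp at hl, hchain2⟩ with hw2def
      have hprod2 : Word.prod w2 = CoprodI.of c * g * (CoprodI.of c)⁻¹ := by
        rw [hw2def, ← hpw]
        simp only [Word.prod]
        rw [List.map_cons, List.map_append, List.prod_cons, List.prod_append]
        simp [mul_assoc]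
      have heq : w2 = w := by
        apply hinj
        rw [hprod2, hpw, hg (CoprodI.of c), mul_inv_cancel_right]
      have hlen := congrArg (fun u : Word H => u.toList.length) heq
      simp only [hw2def] at hlen
      simp at hlen
      omega
    · -- shift case
      have hrest : rest ≠ [] := by
        intro h
        subst h
        apply hlast
        simp [hl0def]
      obtain ⟨⟨i₂, b⟩, rest2, rfl⟩ := List.exists_cons_of_ne_nil hrest
      have hii2 : i ≠ i₂ := by
        have hc2 := hchain
        rw [hL] at hc2
        exact (List.isChain_cons_cons.1 hc2).1
      have hchaint : (⟨i₂, b⟩ :: rest2 : List (Σ i, H i)).IsChain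
          (fun l l' => l.1 ≠ l'.1) := by
        have hc2 := hchain; rw [hL] at hc2; exact (List.isChain_cons_cons.1 hc2).2
      set wt : Word H := ⟨⟨i₂, b⟩ :: rest2, by
          intro l hl
          exact hne_one l (by rw [hL]; exact List.mem_cons_of_mem _ hl), hchaint⟩ with hwtdef
      have hga : g = CoprodI.of a * Word.prod wt := by
        rw [← hpw]
        simp only [Word.prod, hwtdef]
        rw [hL, List.map_cons, List.prod_cons]
      have hl0t : (⟨i₂, b⟩ :: rest2 : List (Σ i, H i)).getLast? = some l0 := by
        rw [List.getLast?_eq_getLast (by simp), hl0def]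
        exact congrArg some (List.getLast_cons (by simp)).symm
      have hchain3 : ((⟨i₂, b⟩ :: rest2) ++ [⟨i, a⟩] : List (Σ i, H i)).IsChain
          (fun l l' => l.1 ≠ l'.1) := by
        rw [List.isChain_append]
        refine ⟨hchaint, by simp, ?_⟩
        intro x hx y hy
        simp at hy
        rw [hl0t, Option.mem_some_iff] at hx
        subst hx
        subst hy
        exact hlast
      set w2 : Word H := ⟨(⟨i₂, b⟩ :: rest2) ++ [⟨i, a⟩], by
          intro l hl
          rw [List.mem_append] at hl
          rcases hl with hl | hl
          · exact hne_one l (by rw [hL]; exact List.mem_cons_of_mem _ hl)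
          · simp at hl
            subst hl
            exact hne_one ⟨i, a⟩ (by rw [hL]; exact List.mem_cons_self), hchain3⟩
        with hw2def
      have hprod2 : Word.prod w2 = Word.prod wt * CoprodI.of a := by
        rw [hw2def]
        simp only [Word.prod, hwtdef]
        rw [List.map_append, List.prod_append]
        simp
      have heq : w2 = w := by
        apply hinj
        rw [hprod2, hpw]
        have h1 : Word.prod wt = (CoprodI.of a)⁻¹ * g := by
          rw [hga, inv_mul_cancel_left]
        rw [h1, mul_assoc, ← hg (CoprodI.of a), inv_mul_cancel_left]
      have hteq := congrArg (fun u : Word H => u.toList) heq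
      simp only [hw2def, hL] at hteq
      rw [List.cons_append] at hteq
      have hhead := congrArg List.head? hteq
      simp only [List.head?_cons, Option.some.injEq] at hhead
      have : i₂ = i := congrArg Sigma.fst hhead
      exact hii2 this.symm

-- hom from Multiplicative (ZMod n) given an element with g ^ n = 1
noncomputable def powHom {W : Type*} [Group W] (n : ℕ) (g : W) (h : g ^ n = 1) :
    Multiplicative (ZMod n) →* W :=
  AddMonoidHom.toMultiplicativeLeft
    (ZMod.lift n ⟨zmultiplesHom (Additive W) (Additive.ofMul g), by
      simp only [zmultiplesHom_apply]
      rw [← ofMul_zpow]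
      simp [h]⟩)

theorem powHom_intCast {W : Type*} [Group W] (n : ℕ) (g : W) (h : g ^ n = 1) (z : ℤ) :
    powHom n g h (Multiplicative.ofAdd ((z : ℤ) : ZMod n)) = g ^ z := by
  simp only [powHom, AddMonoidHom.coe_toMultiplicativeLeft, Function.comp_apply]
  rw [toAdd_ofAdd, ZMod.lift_coe]
  simp only [zmultiplesHom_apply]
  rw [← ofMul_zpow]
  rfl

theorem powHom_one {W : Type*} [Group W] (n : ℕ) (g : W) (h : g ^ n = 1) :
    powHom n g h (Multiplicative.ofAdd (1 : ZMod n)) = g := by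
  have : ((1 : ZMod n)) = ((1 : ℤ) : ZMod n) := by simp
  rw [this, powHom_intCast, zpow_one]

theorem multZMod_hom_ext {n : ℕ} {W : Type*} [Group W]
    {f g : Multiplicative (ZMod n) →* W}
    (h : f (Multiplicative.ofAdd (1 : ZMod n)) = g (Multiplicative.ofAdd (1 : ZMod n))) :
    f = g := by
  refine MonoidHom.ext fun u => ?_
  obtain ⟨z, hz⟩ := ZMod.intCast_surjective (Multiplicative.toAdd u)
  have hu : u = Multiplicative.ofAdd ((z : ZMod n)) := by
    rw [hz]
    exact (ofAdd_toAdd u).symm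
  have key : ∀ (φ : Multiplicative (ZMod n) →* W),
      φ u = (φ (Multiplicative.ofAdd (1 : ZMod n))) ^ z := by
    intro φ
    rw [hu]
    have : ((z : ZMod n)) = z • (1 : ZMod n) := by simp
    rw [this, ofAdd_zsmul, map_zpow]
  rw [key f, key g, h]

def fam2 (A B : Type) : Bool → Type := fun b => cond b B A

instance fam2.group {A B : Type} [Group A] [Group B] : ∀ b, Group (fam2 A B b)
  | false => inferInstanceAs (Group A)
  | true => inferInstanceAs (Group B)

instance fam2.decEq {A B : Type} [DecidableEq A] [DecidableEq B] :
    ∀ b, DecidableEq (fam2 A B b)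
  | false => inferInstanceAs (DecidableEq A)
  | true => inferInstanceAs (DecidableEq B)

instance fam2.nontrivial {A B : Type} [Nontrivial A] [Nontrivial B] :
    ∀ b, Nontrivial (fam2 A B b)
  | false => inferInstanceAs (Nontrivial A)
  | true => inferInstanceAs (Nontrivial B)

theorem zmod_nontrivial {n : ℕ} (h : n ≠ 1) : Nontrivial (ZMod n) := by
  match n, h with
  | 0, _ => exact inferInstanceAs (Nontrivial ℤ)
  | (k+2), _ =>
      haveI : Fact (1 < k + 2) := ⟨by omega⟩
      infer_instance

/-- the free product `ZMod p * ZMod q`, multiplicatively -/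
abbrev FP (p q : ℕ) : Type :=
  Monoid.CoprodI (fam2 (Multiplicative (ZMod p)) (Multiplicative (ZMod q)))

def FPA (p q : ℕ) : FP p q :=
  Monoid.CoprodI.of (i := false) (Multiplicative.ofAdd (1 : ZMod p))

def FPB (p q : ℕ) : FP p q :=
  Monoid.CoprodI.of (i := true) (Multiplicative.ofAdd (1 : ZMod q))

theorem FPA_pow (p q : ℕ) : FPA p q ^ p = 1 := by
  have h1 : (Multiplicative.ofAdd (1 : ZMod p)) ^ p = 1 := by
    rw [← ofAdd_nsmul]
    simp
  rw [FPA]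
  refine (map_pow (Monoid.CoprodI.of (M := fam2 (Multiplicative (ZMod p)) (Multiplicative (ZMod q))) (i := false)) _ p).symm.trans ?_
  exact (congrArg ((Monoid.CoprodI.of (M := fam2 (Multiplicative (ZMod p)) (Multiplicative (ZMod q))) (i := false)) : Multiplicative (ZMod p) → FP p q) h1).trans (map_one _)

theorem FPB_pow (p q : ℕ) : FPB p q ^ q = 1 := by
  have h1 : (Multiplicative.ofAdd (1 : ZMod q)) ^ q = 1 := by
    rw [← ofAdd_nsmul]
    simp
  rw [FPB]
  refine (map_pow (Monoid.CoprodI.of (M := fam2 (Multiplicative (ZMod p)) (Multiplicative (ZMod q))) (i := true)) _ q).symm.trans ?_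
  exact (congrArg ((Monoid.CoprodI.of (M := fam2 (Multiplicative (ZMod p)) (Multiplicative (ZMod q))) (i := true)) : Multiplicative (ZMod q) → FP p q) h1).trans (map_one _)

theorem FP_central_eq_one {p q : ℕ} (hp : p ≠ 1) (hq : q ≠ 1) {g : FP p q}
    (hg : ∀ h : FP p q, h * g = g * h) : g = 1 := by
  haveI := zmod_nontrivial hp
  haveI := zmod_nontrivial hq
  exact coprodI_central_eq_one (fun i => ⟨!i, by cases i <;> simp⟩) hg

/-- homomorphisms out of `FP p q` agree if they agree on the two generators -/
theorem FP_hom_ext {p q : ℕ} {W : Type*} [Group W] {f g : FP p q →* W}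
    (hA : f (FPA p q) = g (FPA p q)) (hB : f (FPB p q) = g (FPB p q)) : f = g := by
  apply Monoid.CoprodI.ext_hom
  intro i
  cases i
  · exact multZMod_hom_ext (n := p) hA
  · exact multZMod_hom_ext (n := q) hB

/-- build a homomorphism out of `FP p q` -/
noncomputable def FP_lift {p q : ℕ} {W : Type*} [Group W] (a b : W)
    (ha : a ^ p = 1) (hb : b ^ q = 1) : FP p q →* W :=
  Monoid.CoprodI.lift fun i => match i with
    | false => powHom p a ha
    | true => powHom q b hb

theorem FP_lift_A {p q : ℕ} {W : Type*} [Group W] (a b : W)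
    (ha : a ^ p = 1) (hb : b ^ q = 1) : FP_lift a b ha hb (FPA p q) = a := by
  rw [FPA, FP_lift]
  exact (Monoid.CoprodI.lift_of _ _).trans (powHom_one p a ha)

theorem FP_lift_B {p q : ℕ} {W : Type*} [Group W] (a b : W)
    (ha : a ^ p = 1) (hb : b ^ q = 1) : FP_lift a b ha hb (FPB p q) = b := by
  rw [FPB, FP_lift]
  exact (Monoid.CoprodI.lift_of _ _).trans (powHom_one q b hb)



namespace DihedralCenter

def X (m : ℕ) : DihedralArtinGroup m := agen (Mdih m) 0
def Y (m : ℕ) : DihedralArtinGroup m := agen (Mdih m) 1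

theorem mk_rel_one {α : Type*} {rels : Set (FreeGroup α)} {r : FreeGroup α} (h : r ∈ rels) :
    PresentedGroup.mk rels r = 1 :=
  (QuotientGroup.eq_one_iff r).2 (Subgroup.subset_normalClosure h)

theorem rel (m : ℕ) : altProd m (X m) (Y m) = altProd m (Y m) (X m) := by
  have hmem : (altProd m (FreeGroup.of 0) (FreeGroup.of 1) *
      (altProd m (FreeGroup.of 1) (FreeGroup.of 0))⁻¹ : FreeGroup (Fin 2)) ∈
      artinRels (Mdih m) := ⟨0, 1, m, by decide, by simp [Mdih], rfl⟩
  have h1 := mk_rel_one hmem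
  rw [map_mul, map_inv, mul_inv_eq_one, map_altProd, map_altProd] at h1
  exact h1

theorem rel_even (m k : ℕ) (hm : m = 2 * k) :
    (X m * Y m) ^ k = (Y m * X m) ^ k := by
  subst hm
  have h := rel (2 * k)
  rw [altProd_even, altProd_even] at h
  exact h

theorem rel_odd (m k : ℕ) (hm : m = 2 * k + 1) :
    (X m * Y m) ^ k * X m = (Y m * X m) ^ k * Y m := by
  subst hm
  have h := rel (2 * k + 1)
  rw [altProd_odd, altProd_odd] at h
  exact h

theorem mem_center_of_commutes (m : ℕ) (c : DihedralArtinGroup m)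
    (hx : c * X m = X m * c) (hy : c * Y m = Y m * c) :
    c ∈ Subgroup.center (DihedralArtinGroup m) := by
  rw [Subgroup.mem_center_iff]
  intro g
  have hg : g ∈ Subgroup.centralizer {c} := by
    refine PresentedGroup.generated_by _ _ (fun j => ?_) g
    rw [Subgroup.mem_centralizer_iff]
    intro h hh
    rw [Set.mem_singleton_iff] at hh
    subst hh
    fin_cases j
    · exact hx
    · exact hy
  exact (Subgroup.mem_centralizer_iff.1 hg c rfl).symm

theorem central_even (m k : ℕ) (hm : m = 2 * k) :
    (X m * Y m) ^ k ∈ Subgroup.center (DihedralArtinGroup m) := by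
  apply mem_center_of_commutes
  · -- (XY)^k * X = X * (XY)^k
    rw [← mul_pow_mul' (X m) (Y m) k, ← rel_even m k hm]
  · -- (XY)^k * Y = Y * (XY)^k
    rw [rel_even m k hm, ← mul_pow_mul' (Y m) (X m) k, ← rel_even m k hm]

theorem delta_sq (m k : ℕ) (hm : m = 2 * k + 1) :
    ((X m * Y m) ^ k * X m) * ((X m * Y m) ^ k * X m) = (X m * Y m) ^ m := by
  nth_rewrite 2 [rel_odd m k hm]
  calc ((X m * Y m) ^ k * X m) * ((Y m * X m) ^ k * Y m)
      = (X m * Y m) ^ k * (X m * (Y m * X m) ^ k) * Y m := by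
        simp [mul_assoc]
    _ = (X m * Y m) ^ k * ((X m * Y m) ^ k * X m) * Y m := by
        rw [mul_pow_mul']
    _ = ((X m * Y m) ^ k * (X m * Y m) ^ k) * (X m * Y m) := by
        simp [mul_assoc]
    _ = (X m * Y m) ^ m := by
        rw [← pow_add, ← pow_succ]
        congr 1
        omega

theorem delta_x (m k : ℕ) (hm : m = 2 * k + 1) :
    ((X m * Y m) ^ k * X m) * X m = Y m * ((X m * Y m) ^ k * X m) := by
  conv_lhs => rw [rel_odd m k hm]
  rw [← mul_pow_mul' (Y m) (X m) k]
  simp [mul_assoc]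

theorem delta_y (m k : ℕ) (hm : m = 2 * k + 1) :
    ((X m * Y m) ^ k * X m) * Y m = X m * ((X m * Y m) ^ k * X m) := by
  conv_rhs => rw [rel_odd m k hm]
  rw [← mul_pow_mul' (X m) (Y m) k]
  simp [mul_assoc]

theorem central_odd (m k : ℕ) (hm : m = 2 * k + 1) :
    (X m * Y m) ^ m ∈ Subgroup.center (DihedralArtinGroup m) := by
  apply mem_center_of_commutes
  · rw [← delta_sq m k hm, mul_assoc, delta_x m k hm, ← mul_assoc, delta_y m k hm, mul_assoc]
  · rw [← delta_sq m k hm, mul_assoc, delta_y m k hm, ← mul_assoc, delta_x m k hm, mul_assoc]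



theorem fin2_pairs {i j : Fin 2} (h : i ≠ j) : (i = 0 ∧ j = 1) ∨ (i = 1 ∧ j = 0) := by
  fin_cases i <;> fin_cases j <;> simp_all

noncomputable def deg (m : ℕ) : DihedralArtinGroup m →* Multiplicative ℤ :=
  PresentedGroup.toGroup (f := fun _ => Multiplicative.ofAdd (1 : ℤ)) (by
    rintro r ⟨i, j, m', hij, hm', rfl⟩
    rw [map_mul, map_inv, map_altProd, map_altProd, FreeGroup.lift_apply_of, FreeGroup.lift_apply_of]
    simp)

theorem deg_X (m : ℕ) : deg m (X m) = Multiplicative.ofAdd (1 : ℤ) :=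
  PresentedGroup.toGroup.of _

theorem deg_Y (m : ℕ) : deg m (Y m) = Multiplicative.ofAdd (1 : ℤ) :=
  PresentedGroup.toGroup.of _

theorem not_finOrder (m n : ℕ) (hn : n ≠ 0) : ¬ IsOfFinOrder ((X m * Y m) ^ n) := by
  intro h
  have h2 : IsOfFinOrder (deg m ((X m * Y m) ^ n)) := (deg m).isOfFinOrder h
  have hdeg : deg m ((X m * Y m) ^ n) = Multiplicative.ofAdd ((2 * n : ℕ) : ℤ) := by
    rw [map_pow, map_mul, deg_X, deg_Y, ← ofAdd_add, ← ofAdd_nsmul]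
    congr 1
    push_cast
    ring
  rw [hdeg] at h2
  obtain ⟨c, hc, hpow⟩ := isOfFinOrder_iff_pow_eq_one.1 h2
  rw [← ofAdd_nsmul] at hpow
  have h0 : n = 0 ∨ c = 0 := by
    have h1 := congrArg Multiplicative.toAdd hpow
    simpa using h1
  omega

theorem even_center_le (m k : ℕ) (hm : m = 2 * k) (hk : k ≠ 1)
    (g : DihedralArtinGroup m) (hg : g ∈ Subgroup.center (DihedralArtinGroup m)) :
    g ∈ Subgroup.zpowers ((X m * Y m) ^ k) := by
  classical
  have hzc : (X m * Y m) ^ k ∈ Subgroup.center (DihedralArtinGroup m) := central_even m k hm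
  set z := (X m * Y m) ^ k with hz
  set N := Subgroup.zpowers z with hN
  haveI : N.Normal := by
    constructor
    intro n hn gg
    have hnc : n ∈ Subgroup.center (DihedralArtinGroup m) := by
      obtain ⟨t, rfl⟩ := hn
      exact Subgroup.zpow_mem _ hzc t
    rw [Subgroup.mem_center_iff.1 hnc gg, mul_inv_cancel_right]
    exact hn
  set mkQ : DihedralArtinGroup m →* (DihedralArtinGroup m ⧸ N) := QuotientGroup.mk' N with hmkQ
  have hzQ : mkQ z = 1 := (QuotientGroup.eq_one_iff z).2 (Subgroup.mem_zpowers z)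
  have hBk : (mkQ (X m) * mkQ (Y m)) ^ k = 1 := by
    rw [← map_mul, ← map_pow]
    exact hzQ
  set ψ : FP 0 k →* (DihedralArtinGroup m ⧸ N) :=
    FP_lift (mkQ (X m)) (mkQ (X m) * mkQ (Y m)) (pow_zero _) hBk with hψ
  set f : Fin 2 → FP 0 k := ![FPA 0 k, (FPA 0 k)⁻¹ * FPB 0 k] with hf
  have hf0 : f 0 = FPA 0 k := rfl
  have hf1 : f 1 = (FPA 0 k)⁻¹ * FPB 0 k := rfl
  have e1 : f 0 * f 1 = FPB 0 k := by
    rw [hf0, hf1, mul_inv_cancel_left]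
  have e2 : (f 1 * f 0) ^ k = 1 := by
    have hconj : f 1 * f 0 = (FPA 0 k)⁻¹ * FPB 0 k * ((FPA 0 k)⁻¹)⁻¹ := by
      rw [hf0, hf1, inv_inv]
    rw [hconj, conj_pow, FPB_pow]
    simp
  have hv : ∀ i j : Fin 2, i ≠ j → FreeGroup.lift f
      (altProd m (FreeGroup.of i) (FreeGroup.of j)) = 1 := by
    intro i j hij
    rw [map_altProd, FreeGroup.lift_apply_of, FreeGroup.lift_apply_of, hm, altProd_even]
    rcases fin2_pairs hij with ⟨rfl, rfl⟩ | ⟨rfl, rfl⟩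
    · rw [e1, FPB_pow]
    · exact e2
  have hrels : ∀ r ∈ artinRels (Mdih m), FreeGroup.lift f r = 1 := by
    rintro r ⟨i, j, m', hij, hm', rfl⟩
    have hm'm : m' = m := by
      rw [Mdih, if_neg hij] at hm'
      exact_mod_cast hm'.symm
    subst hm'm
    rw [map_mul, map_inv, hv i j hij, hv j i (Ne.symm hij)]
    simp
  set φ₀ : DihedralArtinGroup m →* FP 0 k := PresentedGroup.toGroup hrels with hφ₀
  have hφX : φ₀ (X m) = FPA 0 k := PresentedGroup.toGroup.of hrels
  have hφY : φ₀ (Y m) = (FPA 0 k)⁻¹ * FPB 0 k := PresentedGroup.toGroup.of hrels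
  have hφz : φ₀ z = 1 := by
    rw [hz, map_pow, map_mul, hφX, hφY, mul_inv_cancel_left, FPB_pow]
  have hker : N ≤ φ₀.ker := by
    rintro n ⟨t, rfl⟩
    rw [MonoidHom.mem_ker, map_zpow, hφz, one_zpow]
  set φ : (DihedralArtinGroup m ⧸ N) →* FP 0 k := QuotientGroup.lift N φ₀ hker with hφ
  have hφmk : ∀ w, φ (mkQ w) = φ₀ w := fun w => rfl
  have hψA : ψ (FPA 0 k) = mkQ (X m) := FP_lift_A _ _ _ _
  have hψB : ψ (FPB 0 k) = mkQ (X m) * mkQ (Y m) := FP_lift_B _ _ _ _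
  have hψφ : (ψ.comp φ).comp mkQ = mkQ := by
    apply PresentedGroup.ext
    intro x
    fin_cases x
    · show ψ (φ (mkQ (X m))) = mkQ (X m)
      rw [hφmk, hφX, hψA]
    · show ψ (φ (mkQ (Y m))) = mkQ (Y m)
      rw [hφmk, hφY, map_mul, map_inv, hψA, hψB, inv_mul_cancel_left]
  have hψφ' : ∀ t, ψ (φ t) = t := by
    intro t
    obtain ⟨w, rfl⟩ := QuotientGroup.mk'_surjective N t
    exact DFunLike.congr_fun hψφ w
  have hφψ : ∀ u, φ (ψ u) = u := by
    have : φ.comp ψ = MonoidHom.id (FP 0 k) := by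
      apply FP_hom_ext
      · show φ (ψ (FPA 0 k)) = FPA 0 k
        rw [hψA, hφmk, hφX]
      · show φ (ψ (FPB 0 k)) = FPB 0 k
        rw [hψB, ← map_mul, hφmk, map_mul, hφX, hφY, mul_inv_cancel_left]
    exact fun u => DFunLike.congr_fun this u
  have hgQ : ∀ w : DihedralArtinGroup m, mkQ w * mkQ g = mkQ g * mkQ w := by
    intro w
    rw [← map_mul, Subgroup.mem_center_iff.1 hg w, map_mul]
  have hcentral : ∀ u : FP 0 k, u * φ (mkQ g) = φ (mkQ g) * u := by
    intro u
    conv_lhs => rw [← hφψ u]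
    conv_rhs => rw [← hφψ u]
    rw [← map_mul, ← map_mul]
    congr 1
    obtain ⟨w, hw⟩ := QuotientGroup.mk'_surjective N (ψ u)
    rw [← hw, hgQ w]
  have h1 : φ (mkQ g) = 1 :=
    FP_central_eq_one (by norm_num) hk hcentral
  have h2 : mkQ g = 1 := by
    rw [← hψφ' (mkQ g), h1, map_one]
  exact (QuotientGroup.eq_one_iff g).1 h2

theorem odd_center_le (m k : ℕ) (hm : m = 2 * k + 1) (hm1 : m ≠ 1)
    (g : DihedralArtinGroup m) (hg : g ∈ Subgroup.center (DihedralArtinGroup m)) :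
    g ∈ Subgroup.zpowers ((X m * Y m) ^ m) := by
  classical
  have hzc : (X m * Y m) ^ m ∈ Subgroup.center (DihedralArtinGroup m) := central_odd m k hm
  set z := (X m * Y m) ^ m with hz
  set N := Subgroup.zpowers z with hN
  haveI : N.Normal := by
    constructor
    intro n hn gg
    have hnc : n ∈ Subgroup.center (DihedralArtinGroup m) := by
      obtain ⟨t, rfl⟩ := hn
      exact Subgroup.zpow_mem _ hzc t
    rw [Subgroup.mem_center_iff.1 hnc gg, mul_inv_cancel_right]
    exact hn
  set mkQ : DihedralArtinGroup m →* (DihedralArtinGroup m ⧸ N) := QuotientGroup.mk' N with hmkQ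
  have hzQ : mkQ z = 1 := (QuotientGroup.eq_one_iff z).2 (Subgroup.mem_zpowers z)
  have hBm : (mkQ (X m) * mkQ (Y m)) ^ m = 1 := by
    rw [← map_mul, ← map_pow]
    exact hzQ
  have hD2 : (mkQ ((X m * Y m) ^ k * X m)) ^ 2 = 1 := by
    rw [pow_two, ← map_mul, delta_sq m k hm]
    exact hzQ
  set ψ : FP 2 m →* (DihedralArtinGroup m ⧸ N) :=
    FP_lift (mkQ ((X m * Y m) ^ k * X m)) (mkQ (X m) * mkQ (Y m)) hD2 hBm with hψ
  set A := FPA 2 m with hA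
  set B := FPB 2 m with hB
  have hA2 : A * A = 1 := by rw [hA, ← pow_two]; exact FPA_pow 2 m
  set f : Fin 2 → FP 2 m := ![B ^ (-(k : ℤ)) * A, A⁻¹ * B ^ ((k : ℤ) + 1)] with hf
  have hf0 : f 0 = B ^ (-(k : ℤ)) * A := rfl
  have hf1 : f 1 = A⁻¹ * B ^ ((k : ℤ) + 1) := rfl
  have e1 : f 0 * f 1 = B := by rw [hf0, hf1]; group
  have hval0 : (f 0 * f 1) ^ k * f 0 = A := by
    rw [e1, hf0, ← mul_assoc, ← zpow_natCast B k, ← zpow_add]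
    norm_num
  have hval1 : (f 1 * f 0) ^ k * f 1 = A := by
    rw [hf0, hf1]
    have h1 : A⁻¹ * B ^ ((k:ℤ)+1) * (B ^ (-(k:ℤ)) * A) = A⁻¹ * B * (A⁻¹)⁻¹ := by group
    rw [h1, conj_pow]
    have h2 : (B : FP 2 m) ^ k * B ^ ((k:ℤ)+1) = B ^ m := by
      rw [← zpow_natCast B k, ← zpow_add, ← zpow_natCast B m]; congr 1; omega
    calc A⁻¹ * B ^ k * (A⁻¹)⁻¹ * (A⁻¹ * B ^ ((k:ℤ)+1))
        = A⁻¹ * (B ^ k * B ^ ((k:ℤ)+1)) := by group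
      _ = A⁻¹ * B ^ m := by rw [h2]
      _ = A⁻¹ := by rw [hB, FPB_pow, mul_one]
      _ = A := inv_eq_of_mul_eq_one_right hA2
  have hv : ∀ i j : Fin 2, i ≠ j → FreeGroup.lift f
      (altProd m (FreeGroup.of i) (FreeGroup.of j)) = A := by
    intro i j hij
    rw [map_altProd, FreeGroup.lift_apply_of, FreeGroup.lift_apply_of, altProd_of_odd hm]
    rcases fin2_pairs hij with ⟨rfl, rfl⟩ | ⟨rfl, rfl⟩
    · exact hval0
    · exact hval1
  have hrels : ∀ r ∈ artinRels (Mdih m), FreeGroup.lift f r = 1 := by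
    rintro r ⟨i, j, m', hij, hm', rfl⟩
    have hm'm : m' = m := by
      rw [Mdih, if_neg hij] at hm'
      exact_mod_cast hm'.symm
    subst hm'm
    rw [map_mul, map_inv, hv i j hij, hv j i (Ne.symm hij)]
    simp
  set φ₀ : DihedralArtinGroup m →* FP 2 m := PresentedGroup.toGroup hrels with hφ₀
  have hφX : φ₀ (X m) = f 0 := PresentedGroup.toGroup.of hrels
  have hφY : φ₀ (Y m) = f 1 := PresentedGroup.toGroup.of hrels
  have hφxy : φ₀ (X m * Y m) = B := by rw [map_mul, hφX, hφY, e1]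
  have hφz : φ₀ z = 1 := by
    rw [hz, map_pow, hφxy, hB, FPB_pow]
  have hker : N ≤ φ₀.ker := by
    rintro n ⟨t, rfl⟩
    rw [MonoidHom.mem_ker, map_zpow, hφz, one_zpow]
  set φ : (DihedralArtinGroup m ⧸ N) →* FP 2 m := QuotientGroup.lift N φ₀ hker with hφ
  have hφmk : ∀ w, φ (mkQ w) = φ₀ w := fun w => rfl
  have hψA : ψ A = mkQ ((X m * Y m) ^ k * X m) := FP_lift_A _ _ _ _
  have hψB : ψ B = mkQ (X m) * mkQ (Y m) := FP_lift_B _ _ _ _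
  have hmkD : mkQ ((X m * Y m) ^ k * X m) = (mkQ (X m) * mkQ (Y m)) ^ k * mkQ (X m) := by
    rw [map_mul, map_pow, map_mul]
  have hψφ : (ψ.comp φ).comp mkQ = mkQ := by
    apply PresentedGroup.ext
    intro x
    fin_cases x
    · show ψ (φ (mkQ (X m))) = mkQ (X m)
      rw [hφmk, hφX, hf0, map_mul, map_zpow, hψB, hψA, hmkD]
      group
    · show ψ (φ (mkQ (Y m))) = mkQ (Y m)
      rw [hφmk, hφY, hf1, map_mul, map_zpow, hψB, map_inv, hψA, hmkD]
      group
  have hψφ' : ∀ t, ψ (φ t) = t := by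
    intro t
    obtain ⟨w, rfl⟩ := QuotientGroup.mk'_surjective N t
    exact DFunLike.congr_fun hψφ w
  have hφψ : ∀ u, φ (ψ u) = u := by
    have heq : φ.comp ψ = MonoidHom.id (FP 2 m) := by
      apply FP_hom_ext
      · show φ (ψ (FPA 2 m)) = FPA 2 m
        rw [← hA, hψA, hφmk]
        have hD : φ₀ ((X m * Y m) ^ k * X m) = (f 0 * f 1) ^ k * f 0 := by
          rw [map_mul, map_pow, map_mul, hφX, hφY]
        rw [hD, hval0]
      · show φ (ψ (FPB 2 m)) = FPB 2 m
        rw [← hB, hψB, ← map_mul, hφmk, hφxy]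
    exact fun u => DFunLike.congr_fun heq u
  have hgQ : ∀ w : DihedralArtinGroup m, mkQ w * mkQ g = mkQ g * mkQ w := by
    intro w
    rw [← map_mul, Subgroup.mem_center_iff.1 hg w, map_mul]
  have hcentral : ∀ u : FP 2 m, u * φ (mkQ g) = φ (mkQ g) * u := by
    intro u
    conv_lhs => rw [← hφψ u]
    conv_rhs => rw [← hφψ u]
    rw [← map_mul, ← map_mul]
    congr 1
    obtain ⟨w, hw⟩ := QuotientGroup.mk'_surjective N (ψ u)
    rw [← hw, hgQ w]
  have h1 : φ (mkQ g) = 1 :=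
    FP_central_eq_one (by norm_num) hm1 hcentral
  have h2 : mkQ g = 1 := by
    rw [← hψφ' (mkQ g), h1, map_one]
  exact (QuotientGroup.eq_one_iff g).1 h2

end DihedralCenter


/-- For `m ≥ 3`, the center of `G(m)` is the infinite cyclic subgroup
generated by `z`, where `z = (x₁x₂)^{m/2}` for even `m` and `z = (x₁x₂)^m` for odd `m`. -/
theorem dihedral_center (m : ℕ) (hm : 3 ≤ m) :
    Subgroup.center (DihedralArtinGroup m) =
      Subgroup.zpowers
        (if Even m then (agen (Mdih m) 0 * agen (Mdih m) 1) ^ (m / 2)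
         else (agen (Mdih m) 0 * agen (Mdih m) 1) ^ m) ∧
    ¬ IsOfFinOrder
        (if Even m then (agen (Mdih m) 0 * agen (Mdih m) 1) ^ (m / 2)
         else (agen (Mdih m) 0 * agen (Mdih m) 1) ^ m) := by
  have hXe : agen (Mdih m) 0 = DihedralCenter.X m := rfl
  have hYe : agen (Mdih m) 1 = DihedralCenter.Y m := rfl
  rw [hXe, hYe]
  by_cases hev : Even m
  · rw [if_pos hev]
    obtain ⟨t, ht⟩ := hev
    have hm2 : m = 2 * (m / 2) := by omega
    constructor
    · apply le_antisymm
      · intro g hg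
        exact DihedralCenter.even_center_le m (m / 2) hm2 (by omega) g hg
      · exact Subgroup.zpowers_le.2 (DihedralCenter.central_even m (m / 2) hm2)
    · exact DihedralCenter.not_finOrder m (m / 2) (by omega)
  · rw [if_neg hev]
    have hodd : m % 2 = 1 := Nat.not_even_iff.1 hev
    have hm2 : m = 2 * (m / 2) + 1 := by omega
    constructor
    · apply le_antisymm
      · intro g hg
        exact DihedralCenter.odd_center_le m (m / 2) hm2 (by omega) g hg
      · exact Subgroup.zpowers_le.2 (DihedralCenter.central_odd m (m / 2) hm2)
    · exact DihedralCenter.not_finOrder m m (by omega)
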